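/- Suppose ψ : [0,∞) → ℝ is continuously differentiable with ψ(0) = 0, and suppose E := ∫₀^∞ [ψ'(r)² + (ψ(r) - sin ψ(r) cos ψ(r))²/r⁴] r² dr < ∞. Then for every r > 0, (1/2)(ψ(r)² - sin²ψ(r)) ≤ E. Consequently ψ is bounded: |ψ(r)| ≤ C(E) for a function C with C(E) → 0 as E → 0. -/

import Mathlib

open Real MeasureTheory Filter Set Topology

private lemma sin_lip (a b : ℝ) : |Real.sin a - Real.sin b| ≤ |a - b| := by
  rw [Real.sin_sub_sin]
  have h1 : |Real.sin ((a - b) / 2)| ≤ |(a - b) / 2| := Real.abs_sin_le_abs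
  have h2 : |Real.cos ((a + b) / 2)| ≤ 1 := Real.abs_cos_le_one _
  calc |2 * Real.sin ((a - b) / 2) * Real.cos ((a + b) / 2)|
      = 2 * |Real.sin ((a - b) / 2)| * |Real.cos ((a + b) / 2)| := by
        rw [abs_mul, abs_mul, abs_two]
    _ ≤ 2 * |(a - b) / 2| * 1 := by
        apply mul_le_mul (by linarith) h2 (abs_nonneg _) (by positivity)
    _ = |a - b| := by rw [abs_div, abs_two]; ring

/-- Lower bound for x² - sin²x on [0,1]. -/
private lemma glow1 {x : ℝ} (h0 : 0 ≤ x) (h1 : x ≤ 1) :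
    x ^ 4 / 9 ≤ x ^ 2 - Real.sin x ^ 2 := by
  have hb := abs_le.1 (Real.sin_bound (x := x) (by rwa [abs_of_nonneg h0]))
  rw [abs_of_nonneg h0] at hb
  have hx43 : x ^ 4 ≤ x ^ 3 := by nlinarith [mul_nonneg (pow_nonneg h0 3) (sub_nonneg.2 h1)]
  have hub : Real.sin x ≤ x - 11 * x ^ 3 / 96 := by nlinarith [hb.2]
  have hnn : 0 ≤ Real.sin x :=
    Real.sin_nonneg_of_nonneg_of_le_pi h0 (h1.trans (by linarith [Real.pi_gt_three]))
  have hsq : Real.sin x ^ 2 ≤ (x - 11 * x ^ 3 / 96) ^ 2 := by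
    have := pow_le_pow_left₀ hnn hub 2
    simpa using this
  have hx64 : x ^ 6 ≤ x ^ 4 := by nlinarith
  nlinarith [hsq]

/-- Lower bound for x² - sin²x on [1,∞). -/
private lemma glow2 {x : ℝ} (h1 : 1 ≤ x) : 1 / 5 ≤ x ^ 2 - Real.sin x ^ 2 := by
  have hd := abs_le.1 ((sin_lip x 1).trans_eq (abs_of_nonneg (by linarith)))
  have hs1 : Real.sin 1 ≤ 1 := Real.sin_le_one 1
  have hs1' : -1 ≤ Real.sin 1 := Real.neg_one_le_sin 1
  have key : (1 - Real.sin 1) * (1 + Real.sin 1) ≤ (x - Real.sin x) * (x + Real.sin x) :=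
    mul_le_mul (by linarith [hd.2]) (by linarith [hd.1]) (by linarith) (by linarith [hd.2])
  have hcb := abs_le.1 (Real.cos_bound (x := 1) (by norm_num))
  have hc : 43 / 96 ≤ Real.cos 1 := by norm_num at hcb; linarith [hcb.1]
  have pyth := Real.sin_sq_add_cos_sq 1
  have hcsq : (43 / 96 : ℝ) ^ 2 ≤ Real.cos 1 ^ 2 := by
    have := pow_le_pow_left₀ (by norm_num : (0:ℝ) ≤ 43 / 96) hc 2
    simpa using this
  nlinarith [key]

theorem stmt2 :
    ∃ C : ℝ → ℝ, Tendsto C (𝓝[>] (0:ℝ)) (𝓝 0) ∧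
      ∀ (ψ ψ' : ℝ → ℝ),
        (∀ r : ℝ, 0 ≤ r → HasDerivAt ψ (ψ' r) r) → ψ 0 = 0 →
        IntegrableOn
          (fun r => (ψ' r ^ 2 + (ψ r - Real.sin (ψ r) * Real.cos (ψ r)) ^ 2 / r ^ 4) * r ^ 2)
          (Ioi 0) →
        (∀ r : ℝ, 0 < r →
          ((ψ r) ^ 2 - Real.sin (ψ r) ^ 2) / 2 ≤
            ∫ r in Ioi (0:ℝ),
              (ψ' r ^ 2 + (ψ r - Real.sin (ψ r) * Real.cos (ψ r)) ^ 2 / r ^ 4) * r ^ 2) ∧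
        (∀ r : ℝ, 0 ≤ r →
          |ψ r| ≤ C (∫ r in Ioi (0:ℝ),
              (ψ' r ^ 2 + (ψ r - Real.sin (ψ r) * Real.cos (ψ r)) ^ 2 / r ^ 4) * r ^ 2)) := by
  refine ⟨fun E => if E < 1 / 10 then (18 * E) ^ ((4:ℝ)⁻¹) else Real.sqrt (2 * E + 1), ?_, ?_⟩
  · -- the tendsto claim
    have h1 : Tendsto (fun E : ℝ => (18 * E) ^ ((4:ℝ)⁻¹)) (𝓝[>] 0) (𝓝 0) := by
      have hc : ContinuousAt (fun E : ℝ => (18 * E) ^ ((4:ℝ)⁻¹)) 0 := by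
        have h2 : ContinuousAt (fun y : ℝ => y ^ ((4:ℝ)⁻¹)) ((fun E : ℝ => 18 * E) 0) := by
          simp only [mul_zero]
          exact Real.continuousAt_rpow_const 0 _ (Or.inr (by norm_num))
        exact h2.comp (by fun_prop)
      have ht := hc.tendsto.mono_left (nhdsWithin_le_nhds (s := Set.Ioi (0:ℝ)))
      have h0 : (fun E : ℝ => 18 * E) 0 = 0 := by norm_num
      have hz : ((18:ℝ) * 0) ^ ((4:ℝ)⁻¹) = 0 := by
        rw [mul_zero, Real.zero_rpow (by norm_num)]
      rwa [hz] at ht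
    refine h1.congr' ?_
    filter_upwards [eventually_nhdsWithin_of_eventually_nhds
      (eventually_of_mem (Iio_mem_nhds (by norm_num : (0:ℝ) < 1/10)) fun E hE => hE)] with E hE
    exact (if_pos (show E < 1/10 from hE)).symm
  · intro ψ ψ' hderiv hzero hint
    set G : ℝ → ℝ :=
      fun s => (ψ' s ^ 2 + (ψ s - Real.sin (ψ s) * Real.cos (ψ s)) ^ 2 / s ^ 4) * s ^ 2 with hGdef
    set E : ℝ := ∫ r in Ioi (0:ℝ), G r with hEdef
    have hGnn : ∀ s : ℝ, 0 ≤ G s := by intro s; positivity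
    have hE0 : 0 ≤ E := setIntegral_nonneg measurableSet_Ioi fun s _ => hGnn s
    have main : ∀ r : ℝ, 0 < r → ((ψ r) ^ 2 - Real.sin (ψ r) ^ 2) / 2 ≤ E := by
      intro r hr
      set f : ℝ → ℝ := fun s => ψ' s * (ψ s - Real.sin (ψ s) * Real.cos (ψ s)) with hfdef
      -- derivative of F = (ψ² - sin²ψ)/2
      have hG : ∀ s ∈ uIcc (0:ℝ) r,
          HasDerivAt (fun t => (ψ t ^ 2 - Real.sin (ψ t) ^ 2) / 2) (f s) s := by
        intro s hs
        rw [uIcc_of_le hr.le] at hs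
        have hψ := hderiv s hs.1
        have h := ((hψ.pow 2).sub ((hψ.sin).pow 2)).div_const 2
        refine h.congr_deriv ?_
        simp [hfdef]
        ring
      -- measurability of f on Ioc 0 r
      have hψc : ContinuousOn ψ (Ioc 0 r) := fun s hs =>
        ((hderiv s hs.1.le).continuousAt).continuousWithinAt
      have hmeas : AEStronglyMeasurable f (volume.restrict (Ioc 0 r)) := by
        have h1 : AEStronglyMeasurable ψ' (volume.restrict (Ioc 0 r)) := by
          refine ((measurable_deriv ψ).aestronglyMeasurable.restrict).congr ?_
          rw [EventuallyEq, ae_restrict_iff' measurableSet_Ioc]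
          exact ae_of_all _ fun s hs => ((hderiv s hs.1.le).deriv)
        have h2 : AEStronglyMeasurable
            (fun s => ψ s - Real.sin (ψ s) * Real.cos (ψ s)) (volume.restrict (Ioc 0 r)) := by
          refine ContinuousOn.aestronglyMeasurable ?_ measurableSet_Ioc
          exact hψc.sub ((Real.continuous_sin.comp_continuousOn hψc).mul
            (Real.continuous_cos.comp_continuousOn hψc))
        exact h1.mul h2
      -- the pointwise bound
      have hbound : ∀ s ∈ Ioc (0:ℝ) r, |f s| ≤ 1 / 2 * G s := by
        intro s hs
        have hs0 : (0:ℝ) < s := hs.1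
        set a := ψ' s
        set b := ψ s - Real.sin (ψ s) * Real.cos (ψ s)
        have hab : a * b = (a * s) * (b / s) := by field_simp
        have h2 : 2 * |a * s| * |b / s| ≤ |a * s| ^ 2 + |b / s| ^ 2 := by
          nlinarith [sq_nonneg (|a * s| - |b / s|)]
        have habs : |f s| = |a * s| * |b / s| := by
          rw [hfdef]; simp only []; rw [hab, abs_mul]
        have hGs : G s = |a * s| ^ 2 + |b / s| ^ 2 := by
          rw [hGdef]; simp only [sq_abs]
          field_simp
          ring
        rw [habs, hGs]; linarith
      -- integrability
      have hgint : IntegrableOn G (Ioc 0 r) := hint.mono_set Ioc_subset_Ioi_self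
      have hfint : IntervalIntegrable f volume 0 r := by
        rw [intervalIntegrable_iff_integrableOn_Ioc_of_le hr.le]
        refine Integrable.mono' (hgint.const_mul (1/2)) hmeas ?_
        rw [ae_restrict_iff' measurableSet_Ioc]
        exact ae_of_all _ fun s hs => by
          simpa [Real.norm_eq_abs] using hbound s hs
      have hgint2 : IntervalIntegrable (fun s => 1 / 2 * G s) volume 0 r := by
        rw [intervalIntegrable_iff_integrableOn_Ioc_of_le hr.le]
        exact hgint.const_mul (1/2)
      have hFTC := intervalIntegral.integral_eq_sub_of_hasDerivAt hG hfint
      have hF0 : (ψ 0 ^ 2 - Real.sin (ψ 0) ^ 2) / 2 = 0 := by rw [hzero]; simp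
      have step1 : (ψ r ^ 2 - Real.sin (ψ r) ^ 2) / 2 = ∫ s in (0:ℝ)..r, f s := by
        rw [hFTC, hF0, sub_zero]
      have step2 : (∫ s in (0:ℝ)..r, f s) ≤ ∫ s in (0:ℝ)..r, 1 / 2 * G s := by
        refine intervalIntegral.integral_mono_ae_restrict hr.le hfint hgint2 ?_
        have hres : volume.restrict (Icc (0:ℝ) r) = volume.restrict (Ioc (0:ℝ) r) :=
          (Measure.restrict_congr_set Ioc_ae_eq_Icc).symm
        have hae : ∀ᵐ s ∂(volume.restrict (Ioc (0:ℝ) r)), f s ≤ 1 / 2 * G s :=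
          (ae_restrict_iff' measurableSet_Ioc).2
            (ae_of_all _ fun s hs => le_of_abs_le (hbound s hs))
        show f ≤ᵐ[volume.restrict (Icc (0:ℝ) r)] fun s => 1 / 2 * G s
        rwa [hres]
      have step3 : (∫ s in (0:ℝ)..r, 1 / 2 * G s) ≤ E := by
        rw [intervalIntegral.integral_of_le hr.le]
        have heq : (∫ s in Ioc (0:ℝ) r, 1 / 2 * G s) = 1 / 2 * ∫ s in Ioc (0:ℝ) r, G s :=
          integral_const_mul _ _
        rw [heq]
        have hmono : (∫ s in Ioc (0:ℝ) r, G s) ≤ ∫ s in Ioi (0:ℝ), G s := by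
          refine setIntegral_mono_set hint ?_ (HasSubset.Subset.eventuallyLE Ioc_subset_Ioi_self)
          exact ae_of_all _ fun s => hGnn s
        have hI0 : 0 ≤ ∫ s in Ioc (0:ℝ) r, G s :=
          setIntegral_nonneg measurableSet_Ioc fun s _ => hGnn s
        rw [hEdef]
        linarith
      rw [step1]
      exact step2.trans step3
    refine ⟨main, ?_⟩
    intro r hr
    rcases eq_or_lt_of_le hr with hr0 | hrpos
    · rw [← hr0, hzero]
      simp only [abs_zero]
      show (0:ℝ) ≤ if E < 1 / 10 then (18 * E) ^ ((4:ℝ)⁻¹) else Real.sqrt (2 * E + 1)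
      split_ifs
      · exact Real.rpow_nonneg (by linarith) _
      · exact Real.sqrt_nonneg _
    · have h2E : (ψ r) ^ 2 - Real.sin (ψ r) ^ 2 ≤ 2 * E := by linarith [main r hrpos]
      have hx0 : (0:ℝ) ≤ |ψ r| := abs_nonneg _
      have hxsq : |ψ r| ^ 2 = ψ r ^ 2 := sq_abs _
      have hsinsq : Real.sin |ψ r| ^ 2 = Real.sin (ψ r) ^ 2 := by
        rcases abs_cases (ψ r) with ⟨h, _⟩ | ⟨h, _⟩
        · rw [h]
        · rw [h, Real.sin_neg, neg_sq]
      have hg : |ψ r| ^ 2 - Real.sin |ψ r| ^ 2 ≤ 2 * E := by rw [hxsq, hsinsq]; exact h2E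
      show |ψ r| ≤ if E < 1 / 10 then (18 * E) ^ ((4:ℝ)⁻¹) else Real.sqrt (2 * E + 1)
      by_cases hcase : E < 1 / 10
      · rw [if_pos hcase]
        have hx1 : |ψ r| ≤ 1 := by
          by_contra h
          push_neg at h
          linarith [glow2 h.le]
        have h4 := glow1 hx0 hx1
        have hx4 : |ψ r| ^ (4:ℕ) ≤ 18 * E := by linarith
        have hkey := Real.rpow_le_rpow (pow_nonneg hx0 4) hx4
          (by norm_num : (0:ℝ) ≤ ((4:ℕ):ℝ)⁻¹)
        rw [Real.pow_rpow_inv_natCast hx0 (by norm_num)] at hkey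
        simpa using hkey
      · rw [if_neg hcase]
        have hs : Real.sin (ψ r) ^ 2 ≤ 1 := Real.sin_sq_le_one (ψ r)
        refine (Real.le_sqrt hx0 (by linarith)).2 ?_
        rw [hxsq]
        linarith
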